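/- Let p prime, m ≥ 1, s ≥ 1, f ∈ F_p[x] with deg(f) = m, g = (g_1,...,g_s) ∈ G_{p,m}^s and product weights γ_i > 0. Then R^s_γ(g, f) := Σ_{h ∈ G_{p,m}^s \ {0}, h·g ≡ 0 mod f} Π_{i=1}^s r_p(h_i, γ_i) equals -Π_{i=1}^s (1+γ_i) + p^{-m} Σ_{v ∈ G_{p,m}} Π_{i=1}^s (1 + γ_i + γ_i Σ_{h ∈ G_{p,m}\{0}} r_p(h) X_p((v/f) h g_i)). -/

import Mathlib

open Polynomial Finset
open scoped Classical

/-- The set `G_{p,m}` of polynomials over `F_p` of degree `< m`. -/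
noncomputable def Gset (p m : ℕ) [NeZero p] : Finset (Polynomial (ZMod p)) :=
  (Finset.univ : Finset (Fin m → ZMod p)).image
    (fun c => ∑ i : Fin m, Polynomial.C (c i) * Polynomial.X ^ (i : ℕ))

/-- `r_p(h) = 1/(p^{a+1} sin²(π h_a/p))` for `h` of degree `a` with leading coefficient `h_a`. -/
noncomputable def rp (p : ℕ) (h : Polynomial (ZMod p)) : ℝ :=
  1 / ((p : ℝ) ^ (h.natDegree + 1) * Real.sin (Real.pi * (h.leadingCoeff.val : ℝ) / p) ^ 2)

/-- `r_p(h,γ) = 1+γ` if `h = 0` and `γ r_p(h)` otherwise. -/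
noncomputable def rpw (p : ℕ) (h : Polynomial (ZMod p)) (γ : ℝ) : ℝ :=
  if h = 0 then 1 + γ else γ * rp p h

/-- The expansion of a rational function over `F_p` as a formal Laurent series in `x⁻¹`:
we substitute `x ↦ t⁻¹` where `t` is the variable of `LaurentSeries (ZMod p)`, so that the
coefficient of `x^{-l}` is the coefficient of `t^l`. -/
noncomputable def laurentAtInfty (p : ℕ) [Fact p.Prime] (q : RatFunc (ZMod p)) :
    LaurentSeries (ZMod p) :=
  RatFunc.eval (HahnSeries.C : ZMod p →+* LaurentSeries (ZMod p))
    (HahnSeries.single (-1 : ℤ) (1 : ZMod p)) q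

/-- `X_p(L) = e^{2πi c_{-1}(L)/p}`, where `c_{-1}(L)` is the coefficient of `x⁻¹` of the
Laurent series expansion in `x⁻¹` of the rational function `q`. -/
noncomputable def Xp (p : ℕ) [Fact p.Prime] (q : RatFunc (ZMod p)) : ℂ :=
  Complex.exp (2 * Real.pi * Complex.I * (((laurentAtInfty p q).coeff 1).val : ℂ) / p)

/-- The quantity `R^d_γ(g,f)` for product weights `γ`. -/
noncomputable def Rq (p m : ℕ) [NeZero p] (d : ℕ) (f : Polynomial (ZMod p))
    (g : Fin d → Polynomial (ZMod p)) (γ : ℕ → ℝ) : ℝ :=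
  ∑ h ∈ (Fintype.piFinset fun _ : Fin d => Gset p m).filter
      (fun h => h ≠ 0 ∧ f ∣ ∑ i, h i * g i),
    ∏ i, rpw p (h i) (γ (i : ℕ))


section Aux
variable (p : ℕ) [Fact p.Prime]

noncomputable def phi (q : Polynomial (ZMod p)) : LaurentSeries (ZMod p) :=
  q.eval₂ (HahnSeries.C : ZMod p →+* LaurentSeries (ZMod p)) (HahnSeries.single (-1 : ℤ) 1)

lemma phi_eq (q : Polynomial (ZMod p)) :
    phi p q = ∑ i ∈ Finset.range (q.natDegree + 1),
      HahnSeries.single (-(i : ℤ)) (q.coeff i) := by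
  rw [phi, Polynomial.eval₂_eq_sum_range]
  refine Finset.sum_congr rfl fun i _ => ?_
  rw [HahnSeries.single_pow, one_pow,
    show (HahnSeries.C : ZMod p →+* LaurentSeries (ZMod p)) (q.coeff i)
      = HahnSeries.single 0 (q.coeff i) from rfl, HahnSeries.single_mul_single, zero_add, mul_one,
    show (i • (-1 : ℤ)) = -(i : ℤ) by simp]

lemma phi_coeff (q : Polynomial (ZMod p)) (e : ℤ) :
    (phi p q).coeff e = if e ≤ 0 then q.coeff (-e).toNat else 0 := by
  rw [phi_eq, show (∑ i ∈ Finset.range (q.natDegree + 1), HahnSeries.single (-(i:ℤ)) (q.coeff i)).coeff e = ∑ i ∈ Finset.range (q.natDegree + 1), (HahnSeries.single (-(i:ℤ)) (q.coeff i)).coeff e from map_sum (HahnSeries.coeff.addMonoidHom e) _ _]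
  split_ifs with he
  · rcases Int.exists_eq_neg_ofNat he with ⟨n, rfl⟩
    rw [show (- -(n:ℤ)).toNat = n by omega]
    by_cases hn : n ≤ q.natDegree
    · rw [Finset.sum_eq_single n]
      · simp
      · intro i _ hi
        exact HahnSeries.coeff_single_of_ne (by simpa using fun h => hi (by exact_mod_cast h.symm))
      · intro hn'; simp at hn'; omega
    · rw [Polynomial.coeff_eq_zero_of_natDegree_lt (by omega), Finset.sum_eq_zero]
      intro i hi
      simp only [Finset.mem_range] at hi
      exact HahnSeries.coeff_single_of_ne (by simpa using fun h => by omega)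
  · refine Finset.sum_eq_zero fun i _ => HahnSeries.coeff_single_of_ne (by omega)

lemma phi_ne_zero {q : Polynomial (ZMod p)} (hq : q ≠ 0) : phi p q ≠ 0 := by
  intro h
  have := phi_coeff p q (-(q.natDegree : ℤ))
  rw [h] at this
  simp only [HahnSeries.coeff_zero] at this
  rw [if_pos (by omega), show (- -(q.natDegree:ℤ)).toNat = q.natDegree by omega] at this
  exact Polynomial.leadingCoeff_ne_zero.mpr hq this.symm

lemma phi_order {q : Polynomial (ZMod p)} (hq : q ≠ 0) :
    (phi p q).order = -(q.natDegree : ℤ) := by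
  refine le_antisymm (HahnSeries.order_le_of_coeff_ne_zero ?_) ?_
  · rw [phi_coeff, if_pos (by omega), show (- -(q.natDegree:ℤ)).toNat = q.natDegree by omega]
    exact Polynomial.leadingCoeff_ne_zero.mpr hq
  · by_contra hlt
    push_neg at hlt
    have h0 := (mt HahnSeries.coeff_order_eq_zero.mp (phi_ne_zero p hq))
    rw [phi_coeff] at h0
    have hle : (phi p q).order ≤ 0 := le_trans hlt.le (by omega)
    rw [if_pos hle] at h0
    have := Polynomial.le_natDegree_of_ne_zero h0
    omega

/-- eval₂ of a nonzero polynomial at the Hahn-series point is nonzero. -/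
lemma eval₂_ne_zero {q : Polynomial (ZMod p)} (hq : q ≠ 0) :
    q.eval₂ (HahnSeries.C : ZMod p →+* LaurentSeries (ZMod p))
      (HahnSeries.single (-1 : ℤ) 1) ≠ 0 := phi_ne_zero p hq

lemma lai_add (x y : RatFunc (ZMod p)) :
    laurentAtInfty p (x + y) = laurentAtInfty p x + laurentAtInfty p y :=
  RatFunc.eval_add _ _ (eval₂_ne_zero p (RatFunc.denom_ne_zero x))
    (eval₂_ne_zero p (RatFunc.denom_ne_zero y))

lemma lai_mul (x y : RatFunc (ZMod p)) :
    laurentAtInfty p (x * y) = laurentAtInfty p x * laurentAtInfty p y :=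
  RatFunc.eval_mul _ _ (eval₂_ne_zero p (RatFunc.denom_ne_zero x))
    (eval₂_ne_zero p (RatFunc.denom_ne_zero y))

lemma lai_zero : laurentAtInfty p 0 = 0 := RatFunc.eval_zero _ _

lemma lai_algebraMap (q : Polynomial (ZMod p)) :
    laurentAtInfty p (algebraMap (Polynomial (ZMod p)) (RatFunc (ZMod p)) q) = phi p q := by
  rw [laurentAtInfty, RatFunc.eval_algebraMap]
  rfl

lemma lai_div (v f : Polynomial (ZMod p)) (hf : f ≠ 0) :
    laurentAtInfty p (algebraMap (Polynomial (ZMod p)) (RatFunc (ZMod p)) v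
      / algebraMap (Polynomial (ZMod p)) (RatFunc (ZMod p)) f) = phi p v / phi p f := by
  have hAf : (algebraMap (Polynomial (ZMod p)) (RatFunc (ZMod p)) f) ≠ 0 :=
    RatFunc.algebraMap_ne_zero hf
  have key : laurentAtInfty p (algebraMap (Polynomial (ZMod p)) (RatFunc (ZMod p)) v
      / algebraMap (Polynomial (ZMod p)) (RatFunc (ZMod p)) f) * phi p f = phi p v := by
    rw [← lai_algebraMap, ← lai_mul, div_mul_cancel₀ _ hAf, lai_algebraMap]
  field_simp [phi_ne_zero p hf] at key ⊢
  rw [key]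

lemma mem_Gset_iff {m : ℕ} {h : Polynomial (ZMod p)} :
    h ∈ ((Finset.univ : Finset (Fin m → ZMod p)).image
      (fun c => ∑ i : Fin m, Polynomial.C (c i) * Polynomial.X ^ (i : ℕ)))
      ↔ h.degree < (m : ℕ) := by
  simp only [Finset.mem_image, Finset.mem_univ, true_and]
  constructor
  · rintro ⟨c, rfl⟩
    refine lt_of_le_of_lt (Polynomial.degree_sum_le _ _) ?_
    rw [Finset.sup_lt_iff (by exact_mod_cast WithBot.bot_lt_coe (m:ℕ))]
    intro i _
    refine lt_of_le_of_lt (Polynomial.degree_C_mul_X_pow_le _ _) ?_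
    exact_mod_cast Nat.cast_lt.mpr i.isLt
  · intro hd
    refine ⟨fun i => h.coeff i, ?_⟩
    ext n
    rw [Polynomial.finset_sum_coeff]
    simp only [Polynomial.coeff_C_mul, Polynomial.coeff_X_pow, mul_ite, mul_one, mul_zero]
    by_cases hn : n < m
    · rw [Finset.sum_eq_single (⟨n, hn⟩ : Fin m)]
      · simp
      · intro i _ hi
        rw [if_neg (fun hh => hi (by ext; simp [hh]))]
      · simp
    · rw [Finset.sum_eq_zero, Polynomial.coeff_eq_zero_of_degree_lt
        (lt_of_lt_of_le hd (by exact_mod_cast Nat.cast_le.mpr (by omega)))]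
      intro i _
      rw [if_neg (by omega)]

lemma Gsum_coeff {m : ℕ} (c : Fin m → ZMod p) (j : Fin m) :
    (∑ i : Fin m, Polynomial.C (c i) * Polynomial.X ^ (i : ℕ)).coeff (j : ℕ) = c j := by
  rw [Polynomial.finset_sum_coeff]
  simp only [Polynomial.coeff_C_mul, Polynomial.coeff_X_pow, mul_ite, mul_one, mul_zero]
  rw [Finset.sum_eq_single j]
  · simp
  · intro i _ hij
    rw [if_neg (fun hh => hij (by ext; simpa using hh.symm))]
  · simp

lemma Gset_card {m : ℕ} :
    ((Finset.univ : Finset (Fin m → ZMod p)).image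
      (fun c => ∑ i : Fin m, Polynomial.C (c i) * Polynomial.X ^ (i : ℕ))).card = p ^ m := by
  rw [Finset.card_image_of_injective _ ?_, Finset.card_univ]
  · simp [ZMod.card]
  · intro c c' hcc
    funext j
    simp only at hcc
    rw [← Gsum_coeff p c j, ← Gsum_coeff p c' j, hcc]

noncomputable def ep (x : ZMod p) : ℂ :=
  Complex.exp (2 * Real.pi * Complex.I * (x.val : ℂ) / p)

lemma ep_eq (x : ZMod p) : ep p x = ZMod.stdAddChar x := by
  rw [ZMod.stdAddChar_apply, ZMod.toCircle_apply, ep]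

lemma ep_zero : ep p 0 = 1 := by rw [ep_eq]; exact AddChar.map_zero_eq_one _

lemma ep_add (x y : ZMod p) : ep p (x + y) = ep p x * ep p y := by
  rw [ep_eq, ep_eq, ep_eq]; exact AddChar.map_add_eq_mul _ x y

lemma ep_ne_one {x : ZMod p} (hx : x ≠ 0) : ep p x ≠ 1 := by
  rw [ep_eq]
  intro h
  exact hx (ZMod.injective_stdAddChar (by rw [h, AddChar.map_zero_eq_one]))

lemma Xp'_def (q : RatFunc (ZMod p)) : Xp p q = ep p ((laurentAtInfty p q).coeff 1) := rfl

lemma Xp'_zero : Xp p 0 = 1 := by rw [Xp'_def, lai_zero]; simpa using ep_zero p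

lemma Xp'_add (x y : RatFunc (ZMod p)) : Xp p (x + y) = Xp p x * Xp p y := by
  rw [Xp'_def, Xp'_def, Xp'_def, lai_add, HahnSeries.coeff_add, ep_add]

lemma Xp'_sum {ι : Type*} (t : Finset ι) (q : ι → RatFunc (ZMod p)) :
    Xp p (∑ i ∈ t, q i) = ∏ i ∈ t, Xp p (q i) := by
  classical
  induction t using Finset.cons_induction with
  | empty => simpa using Xp'_zero p
  | cons a t ha ih => rw [Finset.sum_cons, Finset.prod_cons, Xp'_add, ih]

lemma Xp'_poly (q : Polynomial (ZMod p)) :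
    Xp p (algebraMap (Polynomial (ZMod p)) (RatFunc (ZMod p)) q) = 1 := by
  rw [Xp'_def, lai_algebraMap, phi_coeff p q 1, if_neg (by norm_num)]
  exact ep_zero p

lemma mem_Gset {m : ℕ} {h : Polynomial (ZMod p)} : h ∈ Gset p m ↔ h.degree < (m : ℕ) :=
  mem_Gset_iff p

lemma Gset_card2 (m : ℕ) : (Gset p m).card = p ^ m := Gset_card p

local notation "A" => algebraMap (Polynomial (ZMod p)) (RatFunc (ZMod p))

lemma char_sum_zero (m : ℕ) (f : Polynomial (ZMod p)) (hf : f.degree = (m : ℕ))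
    (r : Polynomial (ZMod p)) (hr : r ≠ 0) (hdeg : r.degree < f.degree) :
    ∑ v ∈ Gset p m, Xp p (A v / A f * A r) = 0 := by
  have hf0 : f ≠ 0 := fun h => by simp [h] at hf
  have hfm : f.natDegree = m := Polynomial.natDegree_eq_of_degree_eq_some hf
  have hrm : r.natDegree < m := by
    have := Polynomial.natDegree_lt_natDegree hr hdeg
    omega
  obtain ⟨k, hkl, hkm⟩ : ∃ k : ℕ, (k : ℤ) + 1 = (m : ℤ) - r.natDegree ∧ k < m :=
    ⟨m - 1 - r.natDegree, by omega, by omega⟩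
  set v0 : Polynomial (ZMod p) := Polynomial.X ^ k with hv0
  have hv0m : v0 ∈ Gset p m := by
    rw [mem_Gset, hv0, Polynomial.degree_X_pow]
    exact_mod_cast Nat.cast_lt.mpr hkm
  -- χ is "additive"
  have hchi : ∀ v w : Polynomial (ZMod p),
      Xp p (A (v + w) / A f * A r) = Xp p (A v / A f * A r) * Xp p (A w / A f * A r) := by
    intro v w
    rw [← Xp'_add]
    congr 1
    rw [map_add]
    ring
  -- χ v0 ≠ 1
  have hLne : phi p r / phi p f ≠ 0 :=
    div_ne_zero (phi_ne_zero p hr) (phi_ne_zero p hf0)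
  have horder : (phi p r / phi p f).order = ((k : ℤ) + 1) := by
    have hmul : (phi p r / phi p f) * phi p f = phi p r :=
      div_mul_cancel₀ _ (phi_ne_zero p hf0)
    have := HahnSeries.order_mul hLne (phi_ne_zero p hf0)
    rw [hmul, phi_order p hr, phi_order p hf0, hfm] at this
    omega
  have hchiv0 : Xp p (A v0 / A f * A r) ≠ 1 := by
    have hcalc : A v0 / A f * A r = A (v0 * r) / A f := by
      rw [map_mul]; ring
    rw [Xp'_def, hcalc, lai_div p _ _ hf0]
    have hphiv0r : phi p (v0 * r) = HahnSeries.single (-(k : ℤ)) 1 * phi p r := by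
      have h1 : phi p (v0 * r) = phi p v0 * phi p r := by
        rw [phi, phi, phi, Polynomial.eval₂_mul]
      rw [h1]
      congr 1
      rw [phi, hv0, Polynomial.eval₂_X_pow, HahnSeries.single_pow, one_pow]
      congr 1
      simp
    have hsplit : phi p (v0 * r) / phi p f
        = HahnSeries.single (-(k : ℤ)) 1 * (phi p r / phi p f) := by
      rw [hphiv0r, mul_div_assoc]
    rw [hsplit]
    have hco : (HahnSeries.single (-(k : ℤ)) 1 * (phi p r / phi p f)).coeff 1
        = (phi p r / phi p f).coeff ((k : ℤ) + 1) := by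
      have := HahnSeries.coeff_single_mul_add (r := (1 : ZMod p))
        (x := phi p r / phi p f) (b := (-(k : ℤ))) (a := (k : ℤ) + 1)
      rw [show ((k : ℤ) + 1 + -(k : ℤ)) = 1 by ring] at this
      rw [this, one_mul]
    rw [hco, ← horder]
    exact ep_ne_one p ((mt HahnSeries.coeff_order_eq_zero.mp hLne))
  -- translation trick
  have hbij : ∑ v ∈ Gset p m, Xp p (A (v0 + v) / A f * A r)
      = ∑ v ∈ Gset p m, Xp p (A v / A f * A r) := by
    refine Finset.sum_nbij' (fun v => v0 + v) (fun v => v - v0) ?_ ?_ ?_ ?_ ?_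
    · intro v hv
      rw [mem_Gset] at hv ⊢
      refine lt_of_le_of_lt (Polynomial.degree_add_le _ _) (max_lt ?_ hv)
      rw [hv0, Polynomial.degree_X_pow]
      exact_mod_cast Nat.cast_lt.mpr (by omega)
    · intro v hv
      rw [mem_Gset] at hv ⊢
      refine lt_of_le_of_lt (Polynomial.degree_sub_le _ _) (max_lt hv ?_)
      rw [hv0, Polynomial.degree_X_pow]
      exact_mod_cast Nat.cast_lt.mpr (by omega)
    · intro v _; show v0 + v - v0 = v; ring
    · intro v _; show v0 + (v - v0) = v; ring
    · intro v _; rfl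
  set S := ∑ v ∈ Gset p m, Xp p (A v / A f * A r) with hS
  have h1 : (∑ v ∈ Gset p m, Xp p (A (v0 + v) / A f * A r))
      = Xp p (A v0 / A f * A r) * S := by
    rw [hS, Finset.mul_sum]
    exact Finset.sum_congr rfl fun v _ => hchi v0 v
  have h2 : Xp p (A v0 / A f * A r) * S = 1 * S := by rw [← h1, hbij, one_mul]
  by_contra hS0
  exact hchiv0 (mul_right_cancel₀ hS0 h2)

lemma char_sum (m : ℕ) (f : Polynomial (ZMod p)) (hf : f.degree = (m : ℕ))
    (w : Polynomial (ZMod p)) :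
    ∑ v ∈ Gset p m, Xp p (A v / A f * A w) = if f ∣ w then ((p : ℂ) ^ m) else 0 := by
  have hf0 : f ≠ 0 := fun h => by simp [h] at hf
  have hu : IsUnit (Polynomial.C f.leadingCoeff⁻¹) :=
    Polynomial.isUnit_C.mpr ((Polynomial.leadingCoeff_ne_zero.mpr hf0).isUnit.inv)
  set fm : Polynomial (ZMod p) := f * Polynomial.C f.leadingCoeff⁻¹ with hfm
  have hmon : fm.Monic := Polynomial.monic_mul_leadingCoeff_inv hf0
  set r : Polynomial (ZMod p) := w %ₘ fm with hr
  have hwd : w = f * (Polynomial.C f.leadingCoeff⁻¹ * (w /ₘ fm)) + r := by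
    rw [← mul_assoc, ← hfm]
    conv_lhs => rw [← Polynomial.modByMonic_add_div w fm]
    ring
  have hdvd : f ∣ w ↔ r = 0 := by
    rw [hr, Polynomial.modByMonic_eq_zero_iff_dvd hmon, hfm]
    exact (hu.mul_right_dvd).symm
  have hterm : ∀ v : Polynomial (ZMod p),
      Xp p (A v / A f * A w) = Xp p (A v / A f * A r) := by
    intro v
    conv_lhs => rw [hwd]
    rw [map_add, mul_add, Xp'_add]
    have : A v / A f * A (f * (Polynomial.C f.leadingCoeff⁻¹ * (w /ₘ fm)))
        = A (v * (Polynomial.C f.leadingCoeff⁻¹ * (w /ₘ fm))) := by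
      rw [map_mul]
      have aux : ∀ a b c : RatFunc (ZMod p), b ≠ 0 → a / b * (b * c) = a * c := by
        intro a b c hb; field_simp
      rw [aux _ _ _ (RatFunc.algebraMap_ne_zero hf0), ← map_mul]
    rw [this, Xp'_poly, one_mul]
  rw [Finset.sum_congr rfl fun v _ => hterm v]
  by_cases hr0 : r = 0
  · rw [if_pos (hdvd.mpr hr0), hr0]
    have : ∀ v : Polynomial (ZMod p), Xp p (A v / A f * A 0) = 1 := by
      intro v; rw [map_zero, mul_zero, Xp'_zero]
    rw [Finset.sum_congr rfl fun v _ => this v, Finset.sum_const, Gset_card2]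
    simp
  · rw [if_neg (fun hd => hr0 (hdvd.mp hd))]
    refine char_sum_zero p m f hf r hr0 ?_
    have h1 : fm.degree = f.degree := by
      rw [hfm, Polynomial.degree_mul, Polynomial.degree_C
        (inv_ne_zero (Polynomial.leadingCoeff_ne_zero.mpr hf0)), add_zero]
    rw [← h1]
    exact Polynomial.degree_modByMonic_lt w hmon


theorem main (m s : ℕ) (hm : 1 ≤ m) (hs : 1 ≤ s)
    (f : Polynomial (ZMod p)) (hf : f.degree = (m : ℕ))
    (g : Fin s → Polynomial (ZMod p)) (hg : ∀ i, g i ∈ Gset p m)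
    (γ : ℕ → ℝ) (hγ : ∀ i, 0 < γ i) :
    ((∑ h ∈ (Fintype.piFinset fun _ : Fin s => Gset p m).filter
        (fun h => h ≠ 0 ∧ f ∣ ∑ i, h i * g i),
        ∏ i, rpw p (h i) (γ (i : ℕ)) : ℝ) : ℂ)
      = -∏ i : Fin s, (1 + (γ (i : ℕ) : ℂ))
        + ((p : ℂ) ^ m)⁻¹ * ∑ v ∈ Gset p m, ∏ i : Fin s,
            (1 + (γ (i : ℕ) : ℂ) + (γ (i : ℕ) : ℂ) *
              ∑ h ∈ (Gset p m).filter (fun h => h ≠ 0),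
                (rp p h : ℂ) * Xp p (A v / A f * A (h * g i))) := by
  have hp0 : ((p : ℂ) ^ m) ≠ 0 :=
    pow_ne_zero _ (Nat.cast_ne_zero.mpr (Nat.Prime.ne_zero Fact.out))
  have h0G : (0 : Polynomial (ZMod p)) ∈ Gset p m := by
    rw [mem_Gset, Polynomial.degree_zero]
    exact WithBot.bot_lt_coe _
  -- Step 1: rewrite each inner factor as a sum over all of Gset'
  have step1 : ∀ (v : Polynomial (ZMod p)) (i : Fin s),
      (1 + (γ (i : ℕ) : ℂ) + (γ (i : ℕ) : ℂ) *
        ∑ h ∈ (Gset p m).filter (fun h => h ≠ 0),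
          (rp p h : ℂ) * Xp p (A v / A f * A (h * g i)))
      = ∑ h ∈ Gset p m, ((rpw p h (γ (i : ℕ)) : ℝ) : ℂ)
          * Xp p (A v / A f * A (h * g i)) := by
    intro v i
    rw [← Finset.add_sum_erase _ _ h0G, ← Finset.filter_ne' (Gset p m) 0]
    rw [show ((0 : Polynomial (ZMod p)) * g i) = 0 by ring, map_zero, mul_zero, Xp'_zero,
      mul_one, rpw, if_pos rfl, Finset.mul_sum]
    push_cast
    congr 1
    refine Finset.sum_congr rfl fun h hh => ?_
    rw [Finset.mem_filter] at hh
    rw [rpw, if_neg hh.2]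
    push_cast
    ring
  -- Step 2: expand the product over i into a sum over tuples
  have step2 : ∀ v : Polynomial (ZMod p),
      (∏ i : Fin s, ∑ h ∈ Gset p m, ((rpw p h (γ (i : ℕ)) : ℝ) : ℂ)
          * Xp p (A v / A f * A (h * g i)))
      = ∑ h ∈ Fintype.piFinset (fun _ : Fin s => Gset p m),
          (∏ i : Fin s, ((rpw p (h i) (γ (i : ℕ)) : ℝ) : ℂ))
            * Xp p (A v / A f * A (∑ i, h i * g i)) := by
    intro v
    rw [Finset.prod_univ_sum]
    refine Finset.sum_congr rfl fun h _ => ?_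
    rw [Finset.prod_mul_distrib]
    congr 1
    rw [map_sum, Finset.mul_sum, Xp'_sum]
  -- Step 3: swap sums and apply orthogonality
  have step3 :
      (∑ v ∈ Gset p m, ∑ h ∈ Fintype.piFinset (fun _ : Fin s => Gset p m),
          (∏ i : Fin s, ((rpw p (h i) (γ (i : ℕ)) : ℝ) : ℂ))
            * Xp p (A v / A f * A (∑ i, h i * g i)))
      = ∑ h ∈ Fintype.piFinset (fun _ : Fin s => Gset p m),
          (∏ i : Fin s, ((rpw p (h i) (γ (i : ℕ)) : ℝ) : ℂ))
            * (if f ∣ ∑ i, h i * g i then ((p : ℂ) ^ m) else 0) := by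
    rw [Finset.sum_comm]
    refine Finset.sum_congr rfl fun h _ => ?_
    rw [← char_sum p m f hf, Finset.mul_sum]
  -- put everything together
  have hrw : (∑ v ∈ Gset p m, ∏ i : Fin s,
      (1 + (γ (i : ℕ) : ℂ) + (γ (i : ℕ) : ℂ) *
        ∑ h ∈ (Gset p m).filter (fun h => h ≠ 0),
          (rp p h : ℂ) * Xp p (A v / A f * A (h * g i))))
      = ∑ h ∈ Fintype.piFinset (fun _ : Fin s => Gset p m),
          (∏ i : Fin s, ((rpw p (h i) (γ (i : ℕ)) : ℝ) : ℂ))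
            * (if f ∣ ∑ i, h i * g i then ((p : ℂ) ^ m) else 0) := by
    rw [← step3]
    refine Finset.sum_congr rfl fun v _ => ?_
    rw [← step2]
    exact Finset.prod_congr rfl fun i _ => step1 v i
  rw [hrw, Finset.mul_sum]
  have hsplit : ∀ h : Fin s → Polynomial (ZMod p),
      ((p : ℂ) ^ m)⁻¹ * ((∏ i : Fin s, ((rpw p (h i) (γ (i : ℕ)) : ℝ) : ℂ))
          * (if f ∣ ∑ i, h i * g i then ((p : ℂ) ^ m) else 0))
      = if f ∣ ∑ i, h i * g i then (∏ i : Fin s, ((rpw p (h i) (γ (i : ℕ)) : ℝ) : ℂ)) else 0 := by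
    intro h
    split_ifs
    · field_simp
    · simp
  rw [Finset.sum_congr rfl fun h _ => hsplit h]
  rw [← Finset.sum_filter]
  have h0pi : (0 : Fin s → Polynomial (ZMod p)) ∈ (Fintype.piFinset
      (fun _ : Fin s => Gset p m)).filter (fun h => f ∣ ∑ i, h i * g i) := by
    rw [Finset.mem_filter]
    constructor
    · rw [Fintype.mem_piFinset]
      exact fun _ => h0G
    · simp
  rw [← Finset.add_sum_erase _ _ h0pi]
  have herase : ((Fintype.piFinset (fun _ : Fin s => Gset p m)).filter
        (fun h => f ∣ ∑ i, h i * g i)).erase 0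
      = (Fintype.piFinset (fun _ : Fin s => Gset p m)).filter
        (fun h => h ≠ 0 ∧ f ∣ ∑ i, h i * g i) := by
    ext h
    simp only [Finset.mem_erase, Finset.mem_filter]
    tauto
  rw [herase]
  have h0val : (∏ i : Fin s, ((rpw p ((0 : Fin s → Polynomial (ZMod p)) i)
      (γ (i : ℕ)) : ℝ) : ℂ)) = ∏ i : Fin s, (1 + (γ (i : ℕ) : ℂ)) := by
    refine Finset.prod_congr rfl fun i _ => ?_
    rw [show ((0 : Fin s → Polynomial (ZMod p)) i) = 0 from rfl, rpw, if_pos rfl]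
    push_cast
    ring
  rw [h0val]
  push_cast
  ring

end Aux


/-- `R^s_γ(g,f)` equals the character-sum expression. -/
theorem R_eq_char_sum (p : ℕ) [Fact p.Prime] (m s : ℕ) (hm : 1 ≤ m) (hs : 1 ≤ s)
    (f : Polynomial (ZMod p)) (hf : f.degree = (m : ℕ))
    (g : Fin s → Polynomial (ZMod p)) (hg : ∀ i, g i ∈ Gset p m)
    (γ : ℕ → ℝ) (hγ : ∀ i, 0 < γ i) :
    ((Rq p m s f g γ : ℝ) : ℂ)
      = -∏ i : Fin s, (1 + (γ (i : ℕ) : ℂ))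
        + ((p : ℂ) ^ m)⁻¹ * ∑ v ∈ Gset p m, ∏ i : Fin s,
            (1 + (γ (i : ℕ) : ℂ) + (γ (i : ℕ) : ℂ) *
              ∑ h ∈ (Gset p m).filter (fun h => h ≠ 0),
                (rp p h : ℂ) *
                  Xp p (algebraMap (Polynomial (ZMod p)) (RatFunc (ZMod p)) v
                    / algebraMap (Polynomial (ZMod p)) (RatFunc (ZMod p)) f
                    * algebraMap (Polynomial (ZMod p)) (RatFunc (ZMod p)) (h * g i))) := by
  rw [Rq]
  exact main p m s hm hs f hf g hg γ hγ
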